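/- Let n be a positive integer, k > 0 and β < −μ_n(k), and let A be either of the two real numbers A = ±(1/(nπ))·√(−2(β + μ_n(k))). Then the function u(x) = A·sin(nπx) is a stationary beam solution with parameters β, k. -/

import Mathlib

open Real

/-- `μ_n(k) = k/(n²π²) + n²π²`. -/
noncomputable def mu (n : ℕ) (k : ℝ) : ℝ := k / ((n : ℝ)^2 * π^2) + (n : ℝ)^2 * π^2

/-- A stationary beam solution with parameters `β ∈ ℝ`, `k > 0`: a four-times continuously
differentiable function satisfying the beam equation on `[0,1]`
together with the hinged boundary conditions `u(0) = u(1) = u''(0) = u''(1) = 0`. -/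
def IsStationarySolution (β k : ℝ) (u : ℝ → ℝ) : Prop :=
  ContDiff ℝ 4 u ∧
  (∀ x ∈ Set.Icc (0 : ℝ) 1,
    iteratedDeriv 4 u x
      - (β + ∫ y in (0 : ℝ)..1, (deriv u y)^2) * iteratedDeriv 2 u x + k * u x = 0) ∧
  u 0 = 0 ∧ u 1 = 0 ∧ iteratedDeriv 2 u 0 = 0 ∧ iteratedDeriv 2 u 1 = 0

lemma hasDerivAt_asin (a c x : ℝ) :
    HasDerivAt (fun x => a * Real.sin (c * x)) (a * c * Real.cos (c * x)) x := by
  have h : HasDerivAt (fun x : ℝ => c * x) c x := by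
    simpa using (hasDerivAt_id x).const_mul c
  have h2 := ((Real.hasDerivAt_sin (c * x)).comp x h).const_mul a
  refine h2.congr_deriv ?_
  ring

lemma hasDerivAt_acos (a c x : ℝ) :
    HasDerivAt (fun x => a * Real.cos (c * x)) (-(a * c) * Real.sin (c * x)) x := by
  have h : HasDerivAt (fun x : ℝ => c * x) c x := by
    simpa using (hasDerivAt_id x).const_mul c
  have h2 := ((Real.hasDerivAt_cos (c * x)).comp x h).const_mul a
  refine h2.congr_deriv ?_
  ring

lemma deriv_asin (a c : ℝ) :
    deriv (fun x => a * Real.sin (c * x)) = fun x => a * c * Real.cos (c * x) := by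
  funext x; exact (hasDerivAt_asin a c x).deriv

lemma deriv_acos (a c : ℝ) :
    deriv (fun x => a * Real.cos (c * x)) = fun x => -(a * c) * Real.sin (c * x) := by
  funext x; exact (hasDerivAt_acos a c x).deriv

lemma iteratedDeriv_two (a c : ℝ) :
    iteratedDeriv 2 (fun x => a * Real.sin (c * x))
      = fun x => -(a * c * c) * Real.sin (c * x) := by
  rw [show (2:ℕ) = 0 + 1 + 1 by rfl, iteratedDeriv_succ, iteratedDeriv_succ, iteratedDeriv_zero,
    deriv_asin, deriv_acos]

lemma iteratedDeriv_four (a c : ℝ) :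
    iteratedDeriv 4 (fun x => a * Real.sin (c * x))
      = fun x => (a * c * c * c * c) * Real.sin (c * x) := by
  rw [show (4:ℕ) = 2 + 1 + 1 by rfl, iteratedDeriv_succ, iteratedDeriv_succ,
    iteratedDeriv_two, deriv_asin, deriv_acos]
  funext x; ring_nf

/-- If `β < −μ_n(k)` and `A = ±(1/(nπ))·√(−2(β + μ_n(k)))`, then `u(x) = A·sin(nπx)` is a
stationary beam solution with parameters `β`, `k`. -/
theorem buckled_is_solution (n : ℕ) (hn : 1 ≤ n) (k β A : ℝ) (hk : 0 < k)
    (hβ : β < -mu n k)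
    (hA : A = (1 / ((n : ℝ) * π)) * Real.sqrt (-2 * (β + mu n k)) ∨
          A = -((1 / ((n : ℝ) * π)) * Real.sqrt (-2 * (β + mu n k)))) :
    IsStationarySolution β k (fun x => A * Real.sin ((n : ℝ) * π * x)) := by
  have hn0 : (n : ℝ) ≠ 0 := Nat.cast_ne_zero.mpr (by omega)
  have hc0 : (n : ℝ) * π ≠ 0 := mul_ne_zero hn0 Real.pi_ne_zero
  set c : ℝ := (n : ℝ) * π with hc
  have hμneg : β + mu n k < 0 := by linarith
  -- value of A²
  have hA2 : A ^ 2 = -2 * (β + mu n k) / c ^ 2 := by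
    have hnn : (0:ℝ) ≤ -2 * (β + mu n k) := by linarith
    have hs : Real.sqrt (-2 * (β + mu n k)) ^ 2 = -2 * (β + mu n k) := Real.sq_sqrt hnn
    have key : ((1 / c) * Real.sqrt (-2 * (β + mu n k))) ^ 2 = -2 * (β + mu n k) / c ^ 2 := by
      rw [mul_pow, hs]; field_simp
    rcases hA with h | h <;> rw [h]
    · exact key
    · rw [neg_pow]; simpa using key
  -- integral of (deriv u)²
  have hint : (∫ y in (0:ℝ)..1, (deriv (fun x => A * Real.sin (c * x)) y) ^ 2)
      = A ^ 2 * c ^ 2 / 2 := by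
    rw [deriv_asin]
    have hF : ∀ x ∈ Set.uIcc (0:ℝ) 1,
        HasDerivAt (fun x => (A * c) ^ 2 * (x / 2 + (1 / (4 * c)) * Real.sin (2 * c * x)))
          ((A * c * Real.cos (c * x)) ^ 2) x := by
      intro x _
      have h1 : HasDerivAt (fun x : ℝ => x / 2) (1 / 2) x := by
        simpa using (hasDerivAt_id x).div_const 2
      have h2 := hasDerivAt_asin (1 / (4 * c)) (2 * c) x
      have := ((h1.add h2).const_mul ((A * c) ^ 2))
      refine this.congr_deriv ?_
      have hcos : Real.cos (2 * c * x) = 2 * Real.cos (c * x) ^ 2 - 1 := by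
        rw [show 2 * c * x = 2 * (c * x) by ring, Real.cos_two_mul]
      rw [hcos]
      field_simp
      ring
    have hcont : IntervalIntegrable (fun x => (A * c * Real.cos (c * x)) ^ 2)
        MeasureTheory.volume 0 1 := by
      apply Continuous.intervalIntegrable
      continuity
    rw [intervalIntegral.integral_eq_sub_of_hasDerivAt hF hcont]
    have hsin : Real.sin (2 * c * 1) = 0 := by
      have h21 : (2 * c * 1 : ℝ) = (2 * n : ℕ) * π := by push_cast [hc]; ring
      rw [h21, Real.sin_nat_mul_pi]
    simp only [hsin, mul_zero, zero_mul, Real.sin_zero, mul_one]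
    ring_nf
    rw [show Real.sin ((n : ℝ) * π * 2) = 0 from by
      rw [show ((n : ℝ) * π * 2) = ((2 * n : ℕ) : ℝ) * π by push_cast; ring]
      exact Real.sin_nat_mul_pi _]
    ring
  have hcoef : β + A ^ 2 * c ^ 2 / 2 = -(mu n k) := by
    have : A ^ 2 * c ^ 2 = -2 * (β + mu n k) := by
      rw [hA2]; field_simp
    rw [show A ^ 2 * c ^ 2 / 2 = (A ^ 2 * c ^ 2) / 2 by ring, this]; ring
  have hsin1 : Real.sin c = 0 := by rw [hc]; exact Real.sin_nat_mul_pi n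
  refine ⟨?_, ?_, ?_, ?_, ?_, ?_⟩
  · exact contDiff_const.mul
      ((Real.contDiff_sin.of_le le_top).comp (contDiff_const.mul contDiff_id))
  · intro x _
    rw [hint, iteratedDeriv_four, iteratedDeriv_two, hcoef]
    have hc2 : c ^ 2 = (n : ℝ) ^ 2 * π ^ 2 := by rw [hc]; ring
    have hzero : c ^ 2 * c ^ 2 - mu n k * c ^ 2 + k = 0 := by
      rw [mu, ← hc2]
      have hcc : c ^ 2 ≠ 0 := pow_ne_zero 2 hc0
      field_simp
      ring
    linear_combination A * Real.sin (c * x) * hzero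
  · simp
  · simp [hsin1]
  · rw [iteratedDeriv_two]; simp
  · rw [iteratedDeriv_two]; simp [hsin1]
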